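/- Let Z ⊆ ℝ^d be a nonempty closed convex set, μ > 0, and let (g_t)_{t=1}^T be vectors in ℝ^d with ‖g_t‖ ≤ G for all t. Define Z_1 ∈ Z and Z_{t+1} = proj_Z(Z_t − (1/(μt)) g_t). Then for every fixed comparator C ∈ Z, Σ_{t=1}^T [⟨g_t, Z_t − C⟩ − (μ/2)‖Z_t − C‖²] ≤ (G²/(2μ))(log T + 1). -/

import Mathlib

set_option maxHeartbeats 1000000

open scoped RealInnerProductSpace

lemma proj_sq_le {d : ℕ} {S : Set (EuclideanSpace ℝ (Fin d))}
    (hSconvex : Convex ℝ S)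
    {proj : EuclideanSpace ℝ (Fin d) → EuclideanSpace ℝ (Fin d)}
    (hproj : ∀ x, proj x ∈ S ∧ ∀ y ∈ S, ‖x - proj x‖ ≤ ‖x - y‖)
    (x : EuclideanSpace ℝ (Fin d)) {C : EuclideanSpace ℝ (Fin d)} (hC : C ∈ S) :
    ‖proj x - C‖ ^ 2 ≤ ‖x - C‖ ^ 2 := by
  obtain ⟨hvS, hmin⟩ := hproj x
  set v := proj x with hv
  haveI : Nonempty S := ⟨⟨v, hvS⟩⟩
  have hbdd : BddBelow (Set.range fun w : S => ‖x - w‖) := by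
    refine ⟨0, ?_⟩
    rintro _ ⟨w, rfl⟩
    exact norm_nonneg _
  have hinf : ‖x - v‖ = ⨅ w : S, ‖x - w‖ := by
    refine le_antisymm (le_ciInf fun w => hmin w w.2) (ciInf_le hbdd ⟨v, hvS⟩)
  have hvar : ⟪x - v, C - v⟫ ≤ 0 :=
    (norm_eq_iInf_iff_real_inner_le_zero hSconvex hvS).mp hinf C hC
  have hexp : ‖x - C‖ ^ 2 = ‖x - v‖ ^ 2 + 2 * ⟪x - v, v - C⟫ + ‖v - C‖ ^ 2 := by
    have h : x - C = (x - v) + (v - C) := by abel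
    rw [h, norm_add_sq_real]
  have h2 : ⟪x - v, v - C⟫ = -⟪x - v, C - v⟫ := by
    rw [← inner_neg_right, neg_sub]
  nlinarith [sq_nonneg ‖x - v‖]

lemma telescope_Icc (F : ℕ → ℝ) (n : ℕ) :
    ∑ t ∈ Finset.Icc 1 n, (F t - F (t + 1)) = F 1 - F (n + 1) := by
  induction n with
  | zero => simp
  | succ n ih =>
    rw [Finset.sum_Icc_succ_top (Nat.le_add_left 1 n), ih]
    ring

/-- **Regret of the online projected forward method with step sizes `1/(μt)`**
(Proposition 1 of the paper). Against any fixed comparator `C` in the closed convex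
set `S`, the iterates `Z (t+1) = proj (Z t - (1/(μ t)) g t)` with `‖g t‖ ≤ G` satisfy
`∑_{t=1}^T [⟨g t, Z t - C⟩ - (μ/2)‖Z t - C‖²] ≤ (G²/(2μ)) (log T + 1)`. -/
theorem stmt6 {d : ℕ} (S : Set (EuclideanSpace ℝ (Fin d)))
    (hSclosed : IsClosed S) (hSconvex : Convex ℝ S) (hSne : S.Nonempty)
    (proj : EuclideanSpace ℝ (Fin d) → EuclideanSpace ℝ (Fin d))
    (hproj : ∀ x, proj x ∈ S ∧ ∀ y ∈ S, ‖x - proj x‖ ≤ ‖x - y‖)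
    (μ G : ℝ) (hμ : 0 < μ) (hG : 0 ≤ G)
    (T : ℕ) (hT : 1 ≤ T)
    (g : ℕ → EuclideanSpace ℝ (Fin d)) (hg : ∀ t ∈ Finset.Icc 1 T, ‖g t‖ ≤ G)
    (Z : ℕ → EuclideanSpace ℝ (Fin d)) (hZ1 : Z 1 ∈ S)
    (hZ : ∀ t, 1 ≤ t → Z (t + 1) = proj (Z t - (1 / (μ * t)) • g t))
    (C : EuclideanSpace ℝ (Fin d)) (hC : C ∈ S) :
    ∑ t ∈ Finset.Icc 1 T, (⟪g t, Z t - C⟫ - μ / 2 * ‖Z t - C‖ ^ 2) ≤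
      G ^ 2 / (2 * μ) * (Real.log T + 1) := by
  set a : ℕ → ℝ := fun t => ‖Z t - C‖ ^ 2 with ha
  set F : ℕ → ℝ := fun t => μ * ((t : ℝ) - 1) / 2 * a t with hF
  have key : ∀ t ∈ Finset.Icc 1 T,
      ⟪g t, Z t - C⟫ - μ / 2 * ‖Z t - C‖ ^ 2 ≤
        (F t - F (t + 1)) + G ^ 2 / (2 * μ) * (1 / (t : ℝ)) := by
    intro t ht
    obtain ⟨ht1, htT⟩ := Finset.mem_Icc.mp ht
    have htpos : (0 : ℝ) < (t : ℝ) := by exact_mod_cast ht1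
    have hηbase : (0 : ℝ) < μ * t := mul_pos hμ htpos
    set η : ℝ := 1 / (μ * t) with hη
    have hηpos' : 0 < η := by rw [hη]; positivity
    have h1 : Z (t + 1) = proj (Z t - η • g t) := by
      rw [hη]; exact hZ t ht1
    have hstep : a (t + 1) ≤ ‖(Z t - C) - η • g t‖ ^ 2 := by
      have h3 : Z t - η • g t - C = (Z t - C) - η • g t := by abel
      calc a (t + 1) = ‖proj (Z t - η • g t) - C‖ ^ 2 := by
            simp only [ha]; rw [h1]
        _ ≤ ‖Z t - η • g t - C‖ ^ 2 := proj_sq_le hSconvex hproj _ hC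
        _ = ‖(Z t - C) - η • g t‖ ^ 2 := by rw [h3]
    have hexp : ‖(Z t - C) - η • g t‖ ^ 2 =
        a t - 2 * η * ⟪g t, Z t - C⟫ + η ^ 2 * ‖g t‖ ^ 2 := by
      rw [norm_sub_sq_real, real_inner_smul_right, norm_smul,
        Real.norm_eq_abs, abs_of_pos hηpos', real_inner_comm (Z t - C) (g t)]
      simp only [ha]
      ring
    rw [hexp] at hstep
    have hgt : ‖g t‖ ≤ G := hg t ht
    have hg2 : ‖g t‖ ^ 2 ≤ G ^ 2 := by nlinarith [norm_nonneg (g t)]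
    have hmain : ⟪g t, Z t - C⟫ ≤ (a t - a (t + 1)) / (2 * η) + η / 2 * G ^ 2 := by
      rw [← sub_le_iff_le_add, le_div_iff₀ (by positivity : (0:ℝ) < 2 * η)]
      nlinarith [sq_nonneg η, mul_le_mul_of_nonneg_left hg2 (sq_nonneg η)]
    have h2η : (a t - a (t + 1)) / (2 * η) = μ * (t : ℝ) / 2 * (a t - a (t + 1)) := by
      rw [hη]
      have hμ0 : μ ≠ 0 := hμ.ne'
      have ht0 : (t : ℝ) ≠ 0 := htpos.ne'
      field_simp
    have hη2 : η / 2 * G ^ 2 = G ^ 2 / (2 * μ) * (1 / (t : ℝ)) := by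
      rw [hη]
      have hμ0 : μ ≠ 0 := hμ.ne'
      have ht0 : (t : ℝ) ≠ 0 := htpos.ne'
      field_simp
    have hF1 : F t - F (t + 1) =
        μ * ((t : ℝ) - 1) / 2 * a t - μ * (t : ℝ) / 2 * a (t + 1) := by
      simp only [hF]
      push_cast
      ring
    rw [h2η, hη2] at hmain
    calc ⟪g t, Z t - C⟫ - μ / 2 * ‖Z t - C‖ ^ 2
        = ⟪g t, Z t - C⟫ - μ / 2 * a t := rfl
      _ ≤ μ * (t : ℝ) / 2 * (a t - a (t + 1)) + G ^ 2 / (2 * μ) * (1 / (t : ℝ))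
            - μ / 2 * a t := by linarith
      _ = (F t - F (t + 1)) + G ^ 2 / (2 * μ) * (1 / (t : ℝ)) := by rw [hF1]; ring
  have hsum := Finset.sum_le_sum key
  rw [Finset.sum_add_distrib, telescope_Icc F T, ← Finset.mul_sum] at hsum
  have hF10 : F 1 = 0 := by norm_num [hF]
  have hFT : 0 ≤ F (T + 1) := by
    show 0 ≤ μ * (((T + 1 : ℕ) : ℝ) - 1) / 2 * ‖Z (T + 1) - C‖ ^ 2
    have h : ((T + 1 : ℕ) : ℝ) - 1 = (T : ℝ) := by push_cast; ring
    rw [h]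
    positivity
  have hharm : ∑ t ∈ Finset.Icc 1 T, (1 / (t : ℝ)) = (harmonic T : ℝ) := by
    rw [harmonic_eq_sum_Icc]
    push_cast
    simp [one_div]
  have hlog : (harmonic T : ℝ) ≤ Real.log T + 1 := by
    have := harmonic_le_one_add_log T
    linarith
  have hcoef : (0:ℝ) ≤ G ^ 2 / (2 * μ) := by positivity
  calc ∑ t ∈ Finset.Icc 1 T, (⟪g t, Z t - C⟫ - μ / 2 * ‖Z t - C‖ ^ 2)
      ≤ F 1 - F (T + 1) + G ^ 2 / (2 * μ) * ∑ t ∈ Finset.Icc 1 T, (1 / (t : ℝ)) := hsum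
    _ ≤ G ^ 2 / (2 * μ) * (harmonic T : ℝ) := by rw [hharm, hF10]; linarith
    _ ≤ G ^ 2 / (2 * μ) * (Real.log T + 1) := mul_le_mul_of_nonneg_left hlog hcoef
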